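/- Performance lower bound (Theorem 1): Let M, M̂ be MDPs with the same reward r and value functions bounded by δ. For any policies π (learner) and π_D (behavior), J(π, M) ≥ J(π, M̂) − (2γδ/(1−γ)) · ( E_{(s,a)∼ρ^{π_D}_M}[ d_TV(T(·|s,a), T̂(·|s,a)) ] + sqrt(2·d_JS(ρ^{π_D}_M, ρ^π_{M̂})) ). -/

import Mathlib

set_option linter.unusedSectionVars false
set_option maxHeartbeats 1000000


open scoped BigOperators

/-- A Markov decision process on finite state space `S` and action space `A`,
with reward `r`, transition kernel `T` (as a function giving next-state probabilities),
and discount factor `γ`. -/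
structure MDP (S A : Type*) where
  r : S → A → ℝ
  T : S → A → S → ℝ
  γ : ℝ

variable {S A : Type*} [Fintype S] [Fintype A] [DecidableEq S]

/-- `π` is a stationary stochastic policy: `π s` is a probability distribution over actions. -/
def IsPolicy (π : S → A → ℝ) : Prop :=
  (∀ s a, 0 ≤ π s a) ∧ ∀ s, ∑ a, π s a = 1

/-- `T` is a transition kernel: `T s a` is a probability distribution over next states. -/
def IsKernel (T : S → A → S → ℝ) : Prop :=
  (∀ s a s', 0 ≤ T s a s') ∧ ∀ s a, ∑ s', T s a s' = 1

/-- `μ` is a probability distribution on states. -/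
def IsDist (μ : S → ℝ) : Prop :=
  (∀ s, 0 ≤ μ s) ∧ ∑ s, μ s = 1

/-- `stateDist M π μ₀ t s` is the probability `P^π_{M,t}(s)` that the state at time `t`
equals `s` when executing policy `π` in MDP `M` from initial distribution `μ₀`. -/
noncomputable def stateDist (M : MDP S A) (π : S → A → ℝ) (μ₀ : S → ℝ) : ℕ → S → ℝ
  | 0 => μ₀
  | t + 1 => fun s' => ∑ s, ∑ a, stateDist M π μ₀ t s * π s a * M.T s a s'

/-- Expected reward at time `t` under policy `π` in MDP `M` started from `μ₀`. -/
noncomputable def expRewardAt (M : MDP S A) (π : S → A → ℝ) (μ₀ : S → ℝ) (t : ℕ) : ℝ :=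
  ∑ s, ∑ a, stateDist M π μ₀ t s * π s a * M.r s a

/-- Value function `V^π_M(s) = E[∑_t γ^t r(s_t,a_t) | s₀ = s]`. -/
noncomputable def Vval (M : MDP S A) (π : S → A → ℝ) (s : S) : ℝ :=
  ∑' t : ℕ, M.γ ^ t * expRewardAt M π (fun x => if x = s then (1 : ℝ) else 0) t

/-- Expected discounted return `J(π, M) = E_{s ∼ μ₀}[V^π_M(s)]`. -/
noncomputable def Jval (M : MDP S A) (π : S → A → ℝ) (μ₀ : S → ℝ) : ℝ :=
  ∑ s, μ₀ s * Vval M π s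

/-- Normalized discounted occupancy measure
`ρ^π_M(s,a) = (1-γ) ∑_t γ^t P^π_{M,t}(s) π(a|s)`. -/
noncomputable def occupancy (M : MDP S A) (π : S → A → ℝ) (μ₀ : S → ℝ) (s : S) (a : A) : ℝ :=
  (1 - M.γ) * (∑' t : ℕ, M.γ ^ t * stateDist M π μ₀ t s) * π s a

/-- Total variation distance between finite distributions: `sup_E |p(E) - q(E)|`. -/
noncomputable def tvFin {X : Type*} [Fintype X] (p q : X → ℝ) : ℝ :=
  ⨆ E : Finset X, |∑ x ∈ E, p x - ∑ x ∈ E, q x|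

/-- Kullback–Leibler divergence between finite distributions (`0 log 0 = 0` convention). -/
noncomputable def klFin {X : Type*} [Fintype X] (p q : X → ℝ) : ℝ :=
  ∑ x, p x * Real.log (p x / q x)

/-- Jensen–Shannon divergence between finite distributions. -/
noncomputable def jsFin {X : Type*} [Fintype X] (p q : X → ℝ) : ℝ :=
  (klFin p (fun x => (p x + q x) / 2) + klFin q (fun x => (p x + q x) / 2)) / 2

-- basic lemmas
lemma stateDist_nonneg (M : MDP S A) (π : S → A → ℝ) (μ₀ : S → ℝ)
    (hπ : IsPolicy π) (hT : IsKernel M.T) (hμ : ∀ s, 0 ≤ μ₀ s) :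
    ∀ t s, 0 ≤ stateDist M π μ₀ t s := by
  intro t
  induction t with
  | zero => exact hμ
  | succ t ih =>
    intro s'
    refine Finset.sum_nonneg fun s _ => Finset.sum_nonneg fun a _ => ?_
    exact mul_nonneg (mul_nonneg (ih s) (hπ.1 s a)) (hT.1 s a s')

lemma stateDist_sum (M : MDP S A) (π : S → A → ℝ) (μ₀ : S → ℝ)
    (hπ : IsPolicy π) (hT : IsKernel M.T) (hμ : ∑ s, μ₀ s = 1) :
    ∀ t, ∑ s, stateDist M π μ₀ t s = 1 := by
  intro t
  induction t with
  | zero => exact hμ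
  | succ t ih =>
    show ∑ s', ∑ s, ∑ a, stateDist M π μ₀ t s * π s a * M.T s a s' = 1
    rw [Finset.sum_comm]
    have : ∀ s ∈ Finset.univ, (∑ s' : S, ∑ a, stateDist M π μ₀ t s * π s a * M.T s a s')
        = stateDist M π μ₀ t s := by
      intro s _
      rw [Finset.sum_comm]
      calc (∑ a, ∑ s' : S, stateDist M π μ₀ t s * π s a * M.T s a s')
          = ∑ a, stateDist M π μ₀ t s * π s a := by
            refine Finset.sum_congr rfl fun a _ => ?_
            rw [← Finset.mul_sum, hT.2 s a, mul_one]
        _ = stateDist M π μ₀ t s := by rw [← Finset.mul_sum, hπ.2 s, mul_one]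
    rw [Finset.sum_congr rfl this, ih]

lemma stateDist_le_one (M : MDP S A) (π : S → A → ℝ) (μ₀ : S → ℝ)
    (hπ : IsPolicy π) (hT : IsKernel M.T) (hμ : IsDist μ₀) (t : ℕ) (s : S) :
    stateDist M π μ₀ t s ≤ 1 := by
  have h1 := stateDist_sum M π μ₀ hπ hT hμ.2 t
  have := Finset.single_le_sum (f := fun s => stateDist M π μ₀ t s)
    (fun s _ => stateDist_nonneg M π μ₀ hπ hT hμ.1 t s) (Finset.mem_univ s)
  linarith

noncomputable def stepD (M : MDP S A) (π : S → A → ℝ) (μ : S → ℝ) (s' : S) : ℝ :=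
  ∑ s, ∑ a, μ s * π s a * M.T s a s'

lemma stateDist_succ (M : MDP S A) (π : S → A → ℝ) (μ₀ : S → ℝ) (t : ℕ) :
    stateDist M π μ₀ (t + 1) = stateDist M π (stepD M π μ₀) t := by
  induction t with
  | zero => rfl
  | succ t ih =>
    funext s'
    show (∑ s, ∑ a, stateDist M π μ₀ (t+1) s * π s a * M.T s a s') = _
    rw [ih]
    rfl

noncomputable def dirac (s : S) : S → ℝ := fun x => if x = s then (1:ℝ) else 0

lemma stateDist_linear (M : MDP S A) (π : S → A → ℝ) (μ₀ : S → ℝ) :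
    ∀ t s', stateDist M π μ₀ t s' = ∑ s, μ₀ s * stateDist M π (dirac s) t s' := by
  intro t
  induction t with
  | zero =>
    intro s'
    simp [stateDist, dirac, Finset.sum_ite_eq', eq_comm]
  | succ t ih =>
    intro s''
    calc stateDist M π μ₀ (t+1) s''
        = ∑ s', ∑ a, stateDist M π μ₀ t s' * π s' a * M.T s' a s'' := rfl
      _ = ∑ s', ∑ a, ∑ s, μ₀ s * stateDist M π (dirac s) t s' * π s' a * M.T s' a s'' := by
          refine Finset.sum_congr rfl fun s' _ => Finset.sum_congr rfl fun a _ => ?_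
          rw [ih s', Finset.sum_mul, Finset.sum_mul]
      _ = ∑ s', ∑ s, ∑ a, μ₀ s * stateDist M π (dirac s) t s' * π s' a * M.T s' a s'' := by
          exact Finset.sum_congr rfl fun s' _ => Finset.sum_comm
      _ = ∑ s, ∑ s', ∑ a, μ₀ s * stateDist M π (dirac s) t s' * π s' a * M.T s' a s'' := by
          exact Finset.sum_comm
      _ = ∑ s, μ₀ s * ∑ s', ∑ a, stateDist M π (dirac s) t s' * π s' a * M.T s' a s'' := by
          refine Finset.sum_congr rfl fun s _ => ?_
          rw [Finset.mul_sum]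
          refine Finset.sum_congr rfl fun s' _ => ?_
          rw [Finset.mul_sum]
          exact Finset.sum_congr rfl fun a _ => by ring
      _ = ∑ s, μ₀ s * stateDist M π (dirac s) (t+1) s'' := rfl

noncomputable def Rbound (M : MDP S A) : ℝ := ∑ s, ∑ a, |M.r s a|

lemma pi_le_one (π : S → A → ℝ) (hπ : IsPolicy π) (s : S) (a : A) : π s a ≤ 1 := by
  have := Finset.single_le_sum (f := fun a => π s a) (fun a _ => hπ.1 s a) (Finset.mem_univ a)
  rw [hπ.2 s] at this; exact this

lemma expRewardAt_abs_le (M : MDP S A) (π : S → A → ℝ) (μ₀ : S → ℝ)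
    (hπ : IsPolicy π) (hT : IsKernel M.T) (hμ : IsDist μ₀) (t : ℕ) :
    |expRewardAt M π μ₀ t| ≤ Rbound M := by
  unfold expRewardAt Rbound
  refine (Finset.abs_sum_le_sum_abs _ _).trans (Finset.sum_le_sum fun s _ => ?_)
  refine (Finset.abs_sum_le_sum_abs _ _).trans (Finset.sum_le_sum fun a _ => ?_)
  rw [abs_mul, abs_mul]
  have h1 : |stateDist M π μ₀ t s| ≤ 1 := by
    rw [abs_of_nonneg (stateDist_nonneg M π μ₀ hπ hT hμ.1 t s)]
    exact stateDist_le_one M π μ₀ hπ hT hμ t s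
  have h2 : |π s a| ≤ 1 := by
    rw [abs_of_nonneg (hπ.1 s a)]; exact pi_le_one π hπ s a
  calc |stateDist M π μ₀ t s| * |π s a| * |M.r s a|
      ≤ 1 * 1 * |M.r s a| := by
        apply mul_le_mul_of_nonneg_right _ (abs_nonneg _)
        exact mul_le_mul h1 h2 (abs_nonneg _) zero_le_one
    _ = |M.r s a| := by ring

lemma summable_geom_bdd {γ : ℝ} (hγ0 : 0 ≤ γ) (hγ1 : γ < 1) {f : ℕ → ℝ} {c : ℝ}
    (hf : ∀ t, |f t| ≤ c) : Summable (fun t => γ ^ t * f t) := by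
  refine Summable.of_norm_bounded (g := fun t => c * γ ^ t)
    ((summable_geometric_of_lt_one hγ0 hγ1).mul_left c) (fun t => ?_)
  rw [Real.norm_eq_abs, abs_mul, abs_pow, abs_of_nonneg hγ0, mul_comm]
  exact mul_le_mul_of_nonneg_right (hf t) (pow_nonneg hγ0 t)

noncomputable def JJ (M : MDP S A) (π : S → A → ℝ) (μ : S → ℝ) : ℝ :=
  ∑' t : ℕ, M.γ ^ t * expRewardAt M π μ t

lemma Vval_eq_JJ (M : MDP S A) (π : S → A → ℝ) (s : S) : Vval M π s = JJ M π (dirac s) := rfl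

lemma dirac_isDist (s : S) : IsDist (dirac s) := by
  constructor
  · intro x; unfold dirac; split <;> norm_num
  · simp [dirac]

lemma summable_JJ (M : MDP S A) (π : S → A → ℝ) (μ : S → ℝ)
    (hπ : IsPolicy π) (hT : IsKernel M.T) (hμ : IsDist μ) (hγ0 : 0 < M.γ) (hγ1 : M.γ < 1) :
    Summable (fun t => M.γ ^ t * expRewardAt M π μ t) :=
  summable_geom_bdd hγ0.le hγ1 (fun t => expRewardAt_abs_le M π μ hπ hT hμ t)

lemma expRewardAt_linear (M : MDP S A) (π : S → A → ℝ) (μ : S → ℝ) (t : ℕ) :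
    expRewardAt M π μ t = ∑ s, μ s * expRewardAt M π (dirac s) t := by
  unfold expRewardAt
  calc (∑ x, ∑ a, stateDist M π μ t x * π x a * M.r x a)
      = ∑ x, ∑ a, ∑ s, μ s * stateDist M π (dirac s) t x * π x a * M.r x a := by
        refine Finset.sum_congr rfl fun x _ => Finset.sum_congr rfl fun a _ => ?_
        rw [stateDist_linear M π μ t x, Finset.sum_mul, Finset.sum_mul]
    _ = ∑ x, ∑ s, ∑ a, μ s * stateDist M π (dirac s) t x * π x a * M.r x a := by
        exact Finset.sum_congr rfl fun x _ => Finset.sum_comm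
    _ = ∑ s, ∑ x, ∑ a, μ s * stateDist M π (dirac s) t x * π x a * M.r x a := Finset.sum_comm
    _ = ∑ s, μ s * ∑ x, ∑ a, stateDist M π (dirac s) t x * π x a * M.r x a := by
        refine Finset.sum_congr rfl fun s _ => ?_
        rw [Finset.mul_sum]
        refine Finset.sum_congr rfl fun x _ => ?_
        rw [Finset.mul_sum]
        exact Finset.sum_congr rfl fun a _ => by ring

lemma JJ_linear (M : MDP S A) (π : S → A → ℝ) (μ : S → ℝ)
    (hπ : IsPolicy π) (hT : IsKernel M.T) (hγ0 : 0 < M.γ) (hγ1 : M.γ < 1) :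
    JJ M π μ = ∑ s, μ s * JJ M π (dirac s) := by
  unfold JJ
  calc (∑' t : ℕ, M.γ ^ t * expRewardAt M π μ t)
      = ∑' t : ℕ, ∑ s, μ s * (M.γ ^ t * expRewardAt M π (dirac s) t) := by
        refine tsum_congr fun t => ?_
        rw [expRewardAt_linear, Finset.mul_sum]
        exact Finset.sum_congr rfl fun s _ => by ring
    _ = ∑ s, ∑' t : ℕ, μ s * (M.γ ^ t * expRewardAt M π (dirac s) t) := by
        refine Summable.tsum_finsetSum fun s _ => ?_
        exact (summable_JJ M π (dirac s) hπ hT (dirac_isDist s) hγ0 hγ1).mul_left (μ s)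
    _ = ∑ s, μ s * ∑' t : ℕ, M.γ ^ t * expRewardAt M π (dirac s) t := by
        exact Finset.sum_congr rfl fun s _ => tsum_mul_left

lemma Jval_eq_JJ (M : MDP S A) (π : S → A → ℝ) (μ₀ : S → ℝ)
    (hπ : IsPolicy π) (hT : IsKernel M.T) (hγ0 : 0 < M.γ) (hγ1 : M.γ < 1) :
    Jval M π μ₀ = JJ M π μ₀ := by
  rw [JJ_linear M π μ₀ hπ hT hγ0 hγ1]; rfl

lemma stepD_isDist (M : MDP S A) (π : S → A → ℝ) (μ : S → ℝ)
    (hπ : IsPolicy π) (hT : IsKernel M.T) (hμ : IsDist μ) : IsDist (stepD M π μ) := by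
  constructor
  · intro s'
    exact Finset.sum_nonneg fun s _ => Finset.sum_nonneg fun a _ =>
      mul_nonneg (mul_nonneg (hμ.1 s) (hπ.1 s a)) (hT.1 s a s')
  · have : ∀ t, ∑ s, stateDist M π μ t s = 1 := stateDist_sum M π μ hπ hT hμ.2
    have h1 := this 1
    exact h1

lemma expRewardAt_succ (M : MDP S A) (π : S → A → ℝ) (μ : S → ℝ) (t : ℕ) :
    expRewardAt M π μ (t + 1) = expRewardAt M π (stepD M π μ) t := by
  unfold expRewardAt
  rw [stateDist_succ]

lemma JJ_step (M : MDP S A) (π : S → A → ℝ) (μ : S → ℝ)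
    (hπ : IsPolicy π) (hT : IsKernel M.T) (hμ : IsDist μ) (hγ0 : 0 < M.γ) (hγ1 : M.γ < 1) :
    JJ M π μ = expRewardAt M π μ 0 + M.γ * JJ M π (stepD M π μ) := by
  unfold JJ
  rw [Summable.tsum_eq_zero_add (summable_JJ M π μ hπ hT hμ hγ0 hγ1)]
  simp only [pow_zero, one_mul]
  congr 1
  calc (∑' t : ℕ, M.γ ^ (t+1) * expRewardAt M π μ (t+1))
      = ∑' t : ℕ, M.γ * (M.γ ^ t * expRewardAt M π (stepD M π μ) t) := by
        refine tsum_congr fun t => ?_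
        rw [expRewardAt_succ, pow_succ]
        ring
    _ = M.γ * ∑' t : ℕ, M.γ ^ t * expRewardAt M π (stepD M π μ) t := tsum_mul_left

lemma Vval_bellman (M : MDP S A) (π : S → A → ℝ) (s : S)
    (hπ : IsPolicy π) (hT : IsKernel M.T) (hγ0 : 0 < M.γ) (hγ1 : M.γ < 1) :
    Vval M π s = (∑ a, π s a * M.r s a)
      + M.γ * ∑ s', (∑ a, π s a * M.T s a s') * Vval M π s' := by
  rw [Vval_eq_JJ, JJ_step M π (dirac s) hπ hT (dirac_isDist s) hγ0 hγ1]
  congr 1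
  · unfold expRewardAt stateDist dirac
    simp [Finset.sum_ite_eq']
  · congr 1
    rw [JJ_linear M π (stepD M π (dirac s)) hπ hT hγ0 hγ1]
    refine Finset.sum_congr rfl fun s' _ => ?_
    rw [Vval_eq_JJ]
    congr 1
    unfold stepD dirac
    simp [Finset.sum_ite_eq']

noncomputable def Dexp (M Mhat : MDP S A) (π : S → A → ℝ) (μ₀ : S → ℝ) (j : ℕ) : ℝ :=
  ∑ s, ∑ a, stateDist Mhat π μ₀ j s * π s a *
    (∑ s', (Mhat.T s a s' - M.T s a s') * Vval M π s')

lemma inner_swap (π : S → A → ℝ) (T : S → A → S → ℝ) (V : S → ℝ) (s : S) :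
    (∑ s', (∑ a, π s a * T s a s') * V s') = ∑ a, π s a * (∑ s', T s a s' * V s') := by
  calc (∑ s', (∑ a, π s a * T s a s') * V s')
      = ∑ s', ∑ a, π s a * T s a s' * V s' := by
        exact Finset.sum_congr rfl fun s' _ => by rw [Finset.sum_mul]
    _ = ∑ a, ∑ s', π s a * T s a s' * V s' := Finset.sum_comm
    _ = ∑ a, π s a * (∑ s', T s a s' * V s') := by
        refine Finset.sum_congr rfl fun a _ => ?_
        rw [Finset.mul_sum]
        exact Finset.sum_congr rfl fun s' _ => by ring

lemma step_identity (M Mhat : MDP S A) (π : S → A → ℝ) (μ₀ : S → ℝ)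
    (hr : M.r = Mhat.r) (hπ : IsPolicy π) (hT : IsKernel M.T)
    (hγ0 : 0 < M.γ) (hγ1 : M.γ < 1) (j : ℕ) :
    M.γ * (∑ s, stateDist Mhat π μ₀ (j+1) s * Vval M π s)
      - (∑ s, stateDist Mhat π μ₀ j s * Vval M π s)
      + expRewardAt Mhat π μ₀ j
    = M.γ * Dexp M Mhat π μ₀ j := by
  have hW : (∑ s, stateDist Mhat π μ₀ j s * Vval M π s)
      = expRewardAt Mhat π μ₀ j
        + M.γ * ∑ s, ∑ a, stateDist Mhat π μ₀ j s * π s a *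
            (∑ s', M.T s a s' * Vval M π s') := by
    calc (∑ s, stateDist Mhat π μ₀ j s * Vval M π s)
        = ∑ s, stateDist Mhat π μ₀ j s * ((∑ a, π s a * M.r s a)
            + M.γ * ∑ s', (∑ a, π s a * M.T s a s') * Vval M π s') := by
          exact Finset.sum_congr rfl fun s _ => by
            rw [← Vval_bellman M π s hπ hT hγ0 hγ1]
      _ = ∑ s, ((∑ a, stateDist Mhat π μ₀ j s * π s a * M.r s a)
          + M.γ * ∑ a, stateDist Mhat π μ₀ j s * π s a *
              (∑ s', M.T s a s' * Vval M π s')) := by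
          refine Finset.sum_congr rfl fun s _ => ?_
          rw [inner_swap π M.T (Vval M π) s, mul_add]
          congr 1
          · rw [Finset.mul_sum]
            exact Finset.sum_congr rfl fun a _ => by ring
          · simp only [Finset.mul_sum]
            exact Finset.sum_congr rfl fun a _ => Finset.sum_congr rfl fun s' _ => by ring
      _ = expRewardAt Mhat π μ₀ j
          + M.γ * ∑ s, ∑ a, stateDist Mhat π μ₀ j s * π s a *
              (∑ s', M.T s a s' * Vval M π s') := by
          rw [Finset.sum_add_distrib, ← Finset.mul_sum, hr]
          rfl
  have hW1 : (∑ s, stateDist Mhat π μ₀ (j+1) s * Vval M π s)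
      = ∑ s, ∑ a, stateDist Mhat π μ₀ j s * π s a *
          (∑ s', Mhat.T s a s' * Vval M π s') := by
    calc (∑ s', stateDist Mhat π μ₀ (j+1) s' * Vval M π s')
        = ∑ s', ∑ s, ∑ a, stateDist Mhat π μ₀ j s * π s a * Mhat.T s a s' * Vval M π s' := by
          refine Finset.sum_congr rfl fun s' _ => ?_
          show (∑ s, ∑ a, stateDist Mhat π μ₀ j s * π s a * Mhat.T s a s') * Vval M π s' = _
          rw [Finset.sum_mul]
          exact Finset.sum_congr rfl fun s _ => by rw [Finset.sum_mul]
      _ = ∑ s, ∑ s', ∑ a, stateDist Mhat π μ₀ j s * π s a * Mhat.T s a s' * Vval M π s' :=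
          Finset.sum_comm
      _ = ∑ s, ∑ a, ∑ s', stateDist Mhat π μ₀ j s * π s a * Mhat.T s a s' * Vval M π s' := by
          exact Finset.sum_congr rfl fun s _ => Finset.sum_comm
      _ = ∑ s, ∑ a, stateDist Mhat π μ₀ j s * π s a *
          (∑ s', Mhat.T s a s' * Vval M π s') := by
          refine Finset.sum_congr rfl fun s _ => Finset.sum_congr rfl fun a _ => ?_
          rw [Finset.mul_sum]
          exact Finset.sum_congr rfl fun s' _ => by ring
  rw [hW, hW1]
  unfold Dexp
  rw [Finset.mul_sum, Finset.mul_sum, Finset.mul_sum]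
  have hcan : ∀ (X Y e : ℝ), X - (e + Y) + e = X - Y := by intros; ring
  rw [hcan, ← Finset.sum_sub_distrib]
  refine Finset.sum_congr rfl fun s _ => ?_
  rw [← mul_sub]
  congr 1
  rw [← Finset.sum_sub_distrib]
  refine Finset.sum_congr rfl fun a _ => ?_
  rw [← mul_sub]
  congr 1
  rw [← Finset.sum_sub_distrib]
  exact Finset.sum_congr rfl fun s' _ => by ring

lemma J_diff (M Mhat : MDP S A) (π : S → A → ℝ) (μ₀ : S → ℝ)
    (hr : M.r = Mhat.r) (hγ : M.γ = Mhat.γ) (hγ0 : 0 < M.γ) (hγ1 : M.γ < 1)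
    (hπ : IsPolicy π) (hT : IsKernel M.T) (hThat : IsKernel Mhat.T) (hμ : IsDist μ₀) :
    Jval Mhat π μ₀ = Jval M π μ₀ + ∑' j : ℕ, M.γ ^ (j+1) * Dexp M Mhat π μ₀ j := by
  have hγ0' : 0 < Mhat.γ := hγ ▸ hγ0
  have hγ1' : Mhat.γ < 1 := hγ ▸ hγ1
  have key : ∀ n : ℕ,
      ((∑ t ∈ Finset.range n, M.γ ^ t * expRewardAt Mhat π μ₀ t)
        + M.γ ^ n * (∑ s, stateDist Mhat π μ₀ n s * Vval M π s))
      = Jval M π μ₀ + ∑ j ∈ Finset.range n, M.γ ^ (j+1) * Dexp M Mhat π μ₀ j := by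
    intro n
    induction n with
    | zero => simp [Jval, stateDist]
    | succ n ih =>
      rw [Finset.sum_range_succ, Finset.sum_range_succ (f := fun j => M.γ ^ (j+1) * Dexp M Mhat π μ₀ j)]
      have h := step_identity M Mhat π μ₀ hr hπ hT hγ0 hγ1 n
      linear_combination ih + (M.γ ^ n) * h
  -- bounds
  set B : ℝ := ∑ s, |Vval M π s| with hB
  have hWb : ∀ n, |∑ s, stateDist Mhat π μ₀ n s * Vval M π s| ≤ B := by
    intro n
    refine (Finset.abs_sum_le_sum_abs _ _).trans (Finset.sum_le_sum fun s _ => ?_)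
    rw [abs_mul]
    have h1 : |stateDist Mhat π μ₀ n s| ≤ 1 := by
      rw [abs_of_nonneg (stateDist_nonneg Mhat π μ₀ hπ hThat hμ.1 n s)]
      exact stateDist_le_one Mhat π μ₀ hπ hThat hμ n s
    exact mul_le_of_le_one_left (abs_nonneg _) h1
  set C : ℝ := ∑ s, ∑ a, |∑ s', (Mhat.T s a s' - M.T s a s') * Vval M π s'| with hC
  have hDb : ∀ j, |Dexp M Mhat π μ₀ j| ≤ C := by
    intro j
    unfold Dexp
    refine (Finset.abs_sum_le_sum_abs _ _).trans (Finset.sum_le_sum fun s _ => ?_)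
    refine (Finset.abs_sum_le_sum_abs _ _).trans (Finset.sum_le_sum fun a _ => ?_)
    rw [abs_mul, abs_mul]
    have h1 : |stateDist Mhat π μ₀ j s| ≤ 1 := by
      rw [abs_of_nonneg (stateDist_nonneg Mhat π μ₀ hπ hThat hμ.1 j s)]
      exact stateDist_le_one Mhat π μ₀ hπ hThat hμ j s
    have h2 : |π s a| ≤ 1 := by
      rw [abs_of_nonneg (hπ.1 s a)]; exact pi_le_one π hπ s a
    calc |stateDist Mhat π μ₀ j s| * |π s a| * |∑ s', (Mhat.T s a s' - M.T s a s') * Vval M π s'|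
        ≤ 1 * 1 * |∑ s', (Mhat.T s a s' - M.T s a s') * Vval M π s'| := by
          apply mul_le_mul_of_nonneg_right _ (abs_nonneg _)
          exact mul_le_mul h1 h2 (abs_nonneg _) zero_le_one
      _ = _ := by ring
  have hsumD : Summable (fun j => M.γ ^ (j+1) * Dexp M Mhat π μ₀ j) := by
    have : Summable (fun j => M.γ ^ j * (M.γ * Dexp M Mhat π μ₀ j)) := by
      refine summable_geom_bdd hγ0.le hγ1 (c := M.γ * C) (fun j => ?_)
      rw [abs_mul, abs_of_nonneg hγ0.le]
      exact mul_le_mul_of_nonneg_left (hDb j) hγ0.le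
    refine this.congr fun j => ?_
    rw [pow_succ]; ring
  have hsum_eh : Summable (fun t => M.γ ^ t * expRewardAt Mhat π μ₀ t) := by
    rw [hγ]; exact summable_JJ Mhat π μ₀ hπ hThat hμ hγ0' hγ1'
  have t1a : Filter.Tendsto (fun n => ∑ t ∈ Finset.range n, M.γ ^ t * expRewardAt Mhat π μ₀ t)
      Filter.atTop (nhds (Jval Mhat π μ₀)) := by
    have := hsum_eh.hasSum.tendsto_sum_nat
    have heq : (∑' t : ℕ, M.γ ^ t * expRewardAt Mhat π μ₀ t) = Jval Mhat π μ₀ := by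
      rw [Jval_eq_JJ Mhat π μ₀ hπ hThat hγ0' hγ1', JJ, hγ]
    rwa [heq] at this
  have t1b : Filter.Tendsto (fun n => M.γ ^ n * (∑ s, stateDist Mhat π μ₀ n s * Vval M π s))
      Filter.atTop (nhds 0) := by
    have hgt : Filter.Tendsto (fun n : ℕ => B * M.γ ^ n) Filter.atTop (nhds 0) := by
      simpa using (tendsto_pow_atTop_nhds_zero_of_lt_one hγ0.le hγ1).const_mul B
    refine squeeze_zero_norm (fun n => ?_) hgt
    rw [Real.norm_eq_abs, abs_mul, abs_pow, abs_of_nonneg hγ0.le, mul_comm]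
    exact mul_le_mul_of_nonneg_right (hWb n) (pow_nonneg hγ0.le n)
  have t1 : Filter.Tendsto (fun n =>
      (∑ t ∈ Finset.range n, M.γ ^ t * expRewardAt Mhat π μ₀ t)
        + M.γ ^ n * (∑ s, stateDist Mhat π μ₀ n s * Vval M π s))
      Filter.atTop (nhds (Jval Mhat π μ₀)) := by
    simpa using t1a.add t1b
  have t2 : Filter.Tendsto (fun n =>
      Jval M π μ₀ + ∑ j ∈ Finset.range n, M.γ ^ (j+1) * Dexp M Mhat π μ₀ j)
      Filter.atTop (nhds (Jval M π μ₀ + ∑' j : ℕ, M.γ ^ (j+1) * Dexp M Mhat π μ₀ j)) :=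
    tendsto_const_nhds.add hsumD.hasSum.tendsto_sum_nat
  simp only [key] at t1
  exact tendsto_nhds_unique t1 t2

-- scalar inequality: for x ≥ 0, 3(x-1)² / (2x+4) ≤ x log x - x + 1
lemma key_scalar_aux : ∀ x : ℝ, 0 ≤ x →
    3 * (x - 1)^2 ≤ (2*x + 4) * (x * Real.log x - x + 1) := by
  -- g x = (x+1) log x - 2(x-1);  h x = (2x+4)(x log x - x + 1) - 3(x-1)²
  set g : ℝ → ℝ := fun x => (x + 1) * Real.log x - 2 * (x - 1) with hgdef
  have hg' : ∀ x : ℝ, 0 < x → HasDerivAt g (Real.log x + (x + 1) / x - 2) x := by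
    intro x hx
    have h1 : HasDerivAt (fun x : ℝ => x + 1) 1 x := (hasDerivAt_id x).add_const 1
    have h2 : HasDerivAt Real.log x⁻¹ x := Real.hasDerivAt_log hx.ne'
    have h3 := h1.mul h2
    have h4 : HasDerivAt (fun x : ℝ => 2 * (x - 1)) 2 x := by
      simpa using ((hasDerivAt_id x).sub_const 1).const_mul 2
    have := h3.sub h4
    refine this.congr_deriv ?_
    ring
  have hgpos : ∀ x : ℝ, 0 < x → 0 ≤ Real.log x + (x + 1) / x - 2 := by
    intro x hx
    have h1 : Real.log x⁻¹ ≤ x⁻¹ - 1 := Real.log_le_sub_one_of_pos (by positivity)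
    rw [Real.log_inv] at h1
    have h2 : 1 - 1/x ≤ Real.log x := by
      have : x⁻¹ = 1/x := by rw [inv_eq_one_div]
      linarith [h1, this ▸ h1]
    have h3 : (x + 1) / x = 1 + 1/x := by field_simp
    rw [h3]; linarith
  have hgmono : MonotoneOn g (Set.Ioi (0:ℝ)) := by
    refine monotoneOn_of_deriv_nonneg (convex_Ioi 0) ?_ ?_ ?_
    · intro x hx
      exact (hg' x hx).continuousAt.continuousWithinAt
    · intro x hx
      rw [interior_Ioi] at hx
      exact (hg' x hx).differentiableAt.differentiableWithinAt
    · intro x hx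
      rw [interior_Ioi] at hx
      rw [(hg' x hx).deriv]
      exact hgpos x hx
  have hg1 : g 1 = 0 := by simp [hgdef]
  set h : ℝ → ℝ := fun x => (2*x + 4) * (x * Real.log x - x + 1) - 3 * (x - 1)^2 with hhdef
  have hh' : ∀ x : ℝ, 0 < x → HasDerivAt h (4 * g x) x := by
    intro x hx
    have h1 : HasDerivAt (fun x : ℝ => 2*x + 4) 2 x := by
      simpa using ((hasDerivAt_id x).const_mul 2).add_const 4
    have h2 : HasDerivAt (fun x : ℝ => x * Real.log x - x + 1) (Real.log x) x := by
      have := (Real.hasDerivAt_mul_log hx.ne').sub (hasDerivAt_id x)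
      simpa using this.add_const 1
    have h3 := h1.mul h2
    have h4 : HasDerivAt (fun x : ℝ => 3 * (x - 1)^2) (3 * (2 * (x-1))) x := by
      have : HasDerivAt (fun x : ℝ => (x - 1)^2) (2 * (x-1)) x := by
        simpa using ((hasDerivAt_id x).sub_const 1).fun_pow 2
      simpa [mul_comm] using this.const_mul 3
    have := h3.sub h4
    refine this.congr_deriv ?_
    simp only [hgdef]
    ring
  have hcont : Continuous h := by
    have : Continuous fun x : ℝ => x * Real.log x := Real.continuous_mul_log
    continuity
  have hh1 : h 1 = 0 := by simp [hhdef]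
  have hnonneg : ∀ x : ℝ, 0 ≤ x → 0 ≤ h x := by
    intro x hx
    rcases le_or_gt x 1 with hx1 | hx1
    · -- antitone on [0,1]
      have hanti : AntitoneOn h (Set.Icc (0:ℝ) 1) := by
        refine antitoneOn_of_deriv_nonpos (convex_Icc 0 1) hcont.continuousOn ?_ ?_
        · intro y hy
          rw [interior_Icc] at hy
          exact (hh' y hy.1).differentiableAt.differentiableWithinAt
        · intro y hy
          rw [interior_Icc] at hy
          rw [(hh' y hy.1).deriv]
          have : g y ≤ g 1 := hgmono hy.1 (by norm_num) hy.2.le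
          rw [hg1] at this
          linarith
      have := hanti ⟨hx, hx1⟩ (by norm_num : (1:ℝ) ∈ Set.Icc (0:ℝ) 1) hx1
      rw [hh1] at this
      exact this
    · have hmono : MonotoneOn h (Set.Ici (1:ℝ)) := by
        refine monotoneOn_of_deriv_nonneg (convex_Ici 1) hcont.continuousOn ?_ ?_
        · intro y hy
          rw [interior_Ici] at hy
          exact (hh' y (by linarith [Set.mem_Ioi.mp hy] : (0:ℝ) < y)).differentiableAt.differentiableWithinAt
        · intro y hy
          rw [interior_Ici] at hy
          have hy1 : (1:ℝ) < y := hy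
          rw [(hh' y (by linarith)).deriv]
          have : g 1 ≤ g y := hgmono (by norm_num) (Set.mem_Ioi.mpr (by linarith)) hy1.le
          rw [hg1] at this
          linarith
      have := hmono (by norm_num : (1:ℝ) ∈ Set.Ici (1:ℝ)) (Set.mem_Ici.mpr hx1.le) hx1.le
      rw [hh1] at this
      exact this
  intro x hx
  have := hnonneg x hx
  simp only [hhdef] at this
  linarith

lemma pw_kl (a m : ℝ) (ha : 0 ≤ a) (hm : 0 ≤ m) (ham : m = 0 → a = 0) :
    3 * (a - m)^2 / (2*a + 4*m) ≤ a * Real.log (a / m) - a + m := by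
  rcases eq_or_lt_of_le hm with hm0 | hm0
  · rw [ham hm0.symm, ← hm0]; norm_num
  rcases eq_or_lt_of_le ha with ha0 | ha0
  · rw [← ha0]
    have h1 : 3 * (0 - m)^2 / (2*0 + 4*m) = 3 * m / 4 := by
      field_simp; ring
    rw [h1]; simp; linarith
  -- a, m > 0 : substitute x = a/m
  have hx : 0 < a / m := div_pos ha0 hm0
  have key := key_scalar_aux (a/m) hx.le
  have h2 : 2 * (a/m) + 4 > 0 := by positivity
  have hexp : a * Real.log (a/m) - a + m = m * ((a/m) * Real.log (a/m) - (a/m) + 1) := by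
    field_simp
  have hlhs : 3 * (a - m)^2 / (2*a + 4*m) = m * (3 * ((a/m) - 1)^2) / (2*(a/m) + 4) := by
    rw [div_eq_div_iff (by positivity : (0:ℝ) < 2*a + 4*m).ne' h2.ne']
    field_simp
  rw [hexp, hlhs]
  rw [div_le_iff₀ h2]
  calc m * (3 * ((a/m) - 1)^2) ≤ m * ((2*(a/m) + 4) * ((a/m) * Real.log (a/m) - (a/m) + 1)) := by
        apply mul_le_mul_of_nonneg_left _ hm
        linarith [key]
    _ = m * ((a/m) * Real.log (a/m) - (a/m) + 1) * (2*(a/m) + 4) := by ring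

lemma kl_lower {X : Type*} [Fintype X] (p q : X → ℝ)
    (hp : (∀ x, 0 ≤ p x) ∧ ∑ x, p x = 1) (hq : (∀ x, 0 ≤ q x) ∧ ∑ x, q x = 1) :
    (∑ x, |p x - (p x + q x)/2|)^2 ≤ 2 * klFin p (fun x => (p x + q x)/2) := by
  set m : X → ℝ := fun x => (p x + q x)/2 with hm
  have hmnn : ∀ x, 0 ≤ m x := fun x => by
    have := hp.1 x; have := hq.1 x; simp only [hm]; linarith
  have hmsum : ∑ x, m x = 1 := by
    simp only [hm]
    rw [← Finset.sum_div, Finset.sum_add_distrib, hp.2, hq.2]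
    norm_num
  -- KL as sum of nonneg terms
  have hkl : klFin p m = ∑ x, (p x * Real.log (p x / m x) - p x + m x) := by
    unfold klFin
    rw [Finset.sum_add_distrib, Finset.sum_sub_distrib, hp.2, hmsum]
    ring
  have hterm : ∀ x, 3 * (p x - m x)^2 / (2 * p x + 4 * m x)
      ≤ p x * Real.log (p x / m x) - p x + m x := by
    intro x
    refine pw_kl (p x) (m x) (hp.1 x) (hmnn x) (fun h0 => ?_)
    have h1 := hp.1 x; have h2 := hq.1 x
    simp only [hm] at h0
    linarith
  have hklge : (∑ x, 3 * (p x - m x)^2 / (2 * p x + 4 * m x)) ≤ klFin p m := by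
    rw [hkl]
    exact Finset.sum_le_sum fun x _ => hterm x
  set u : X → ℝ := fun x => |p x - m x| with hu
  set w : X → ℝ := fun x => (2 * p x + 4 * m x) / 3 with hw
  have hwnn : ∀ x, 0 ≤ w x := by
    intro x; have := hp.1 x; have := hmnn x; simp only [hw]; positivity
  have hw0 : ∀ x, w x = 0 → u x = 0 := by
    intro x h0
    have h1 := hp.1 x; have h2 := hmnn x
    simp only [hw] at h0
    have hp0 : p x = 0 := by linarith
    have hm0 : m x = 0 := by linarith
    simp [hu, hp0, hm0]
  have hfg : ∀ x, u x / Real.sqrt (w x) * Real.sqrt (w x) = u x := by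
    intro x
    rcases eq_or_lt_of_le (hwnn x) with h0 | h0
    · rw [hw0 x h0.symm]; simp
    · exact div_mul_cancel₀ _ (Real.sqrt_pos.mpr h0).ne'
  have hfsq : ∀ x, (u x / Real.sqrt (w x))^2 = 3 * (p x - m x)^2 / (2 * p x + 4 * m x) := by
    intro x
    rcases eq_or_lt_of_le (hwnn x) with h0 | h0
    · have h1 := hp.1 x; have h2 := hmnn x
      simp only [hw] at h0
      have hp0 : p x = 0 := by linarith
      have hm0 : m x = 0 := by linarith
      simp [hu, hp0, hm0]
    · rw [div_pow, Real.sq_sqrt (hwnn x), hu, sq_abs, hw, div_div_eq_mul_div]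
      ring_nf
  have hgsq : ∀ x, (Real.sqrt (w x))^2 = w x := fun x => Real.sq_sqrt (hwnn x)
  have hwsum : ∑ x, w x = 2 := by
    simp only [hw]
    rw [← Finset.sum_div, Finset.sum_add_distrib, ← Finset.mul_sum, ← Finset.mul_sum,
      hp.2, hmsum]
    norm_num
  have hcs := Finset.sum_mul_sq_le_sq_mul_sq Finset.univ
    (fun x => u x / Real.sqrt (w x)) (fun x => Real.sqrt (w x))
  rw [Finset.sum_congr rfl (fun x _ => hfg x)] at hcs
  rw [Finset.sum_congr rfl (fun x _ => hfsq x)] at hcs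
  rw [Finset.sum_congr rfl (fun x _ => hgsq x), hwsum] at hcs
  calc (∑ x, u x)^2 ≤ (∑ x, 3 * (p x - m x)^2 / (2 * p x + 4 * m x)) * 2 := hcs
    _ ≤ klFin p m * 2 := by nlinarith [hklge]
    _ = 2 * klFin p m := by ring

lemma tvFin_bdd {X : Type*} [Fintype X] (p q : X → ℝ) :
    BddAbove (Set.range fun E : Finset X => |∑ x ∈ E, p x - ∑ x ∈ E, q x|) :=
  (Set.finite_range _).bddAbove

lemma le_tvFin {X : Type*} [Fintype X] (p q : X → ℝ) (E : Finset X) :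
    |∑ x ∈ E, p x - ∑ x ∈ E, q x| ≤ tvFin p q :=
  le_ciSup (tvFin_bdd p q) E

lemma tvFin_nonneg {X : Type*} [Fintype X] (p q : X → ℝ) : 0 ≤ tvFin p q := by
  have := le_tvFin p q ∅
  simpa using (abs_nonneg _).trans this

lemma tvFin_le {X : Type*} [Fintype X] (p q : X → ℝ) {c : ℝ}
    (h : ∀ E : Finset X, |∑ x ∈ E, p x - ∑ x ∈ E, q x| ≤ c) : tvFin p q ≤ c :=
  ciSup_le h

lemma tvFin_le_one {X : Type*} [Fintype X] (p q : X → ℝ)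
    (hp : (∀ x, 0 ≤ p x) ∧ ∑ x, p x = 1) (hq : (∀ x, 0 ≤ q x) ∧ ∑ x, q x = 1) :
    tvFin p q ≤ 1 := by
  refine tvFin_le p q fun E => ?_
  have h1 : 0 ≤ ∑ x ∈ E, p x := Finset.sum_nonneg fun x _ => hp.1 x
  have h2 : (∑ x ∈ E, p x) ≤ 1 := by
    rw [← hp.2]
    exact Finset.sum_le_sum_of_subset_of_nonneg (Finset.subset_univ E) fun x _ _ => hp.1 x
  have h3 : 0 ≤ ∑ x ∈ E, q x := Finset.sum_nonneg fun x _ => hq.1 x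
  have h4 : (∑ x ∈ E, q x) ≤ 1 := by
    rw [← hq.2]
    exact Finset.sum_le_sum_of_subset_of_nonneg (Finset.subset_univ E) fun x _ _ => hq.1 x
  rw [abs_le]; constructor <;> linarith

lemma sum_event_le_half_l1 {X : Type*} [Fintype X] (d : X → ℝ) (hd : ∑ x, d x = 0)
    (E : Finset X) : |∑ x ∈ E, d x| ≤ (∑ x, |d x|) / 2 := by
  classical
  have hmax : ∀ x, max (d x) 0 = (d x + |d x|) / 2 := by
    intro x
    rcases abs_cases (d x) with ⟨h1, h2⟩ | ⟨h1, h2⟩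
    · rw [max_eq_left h2, h1]; ring
    · rw [max_eq_right h2.le, h1]; ring
  have hposs : (∑ x, max (d x) 0) = (∑ x, |d x|) / 2 := by
    rw [Finset.sum_congr rfl fun x _ => hmax x, ← Finset.sum_div, Finset.sum_add_distrib, hd,
      zero_add]
  have h1 : (∑ x ∈ E, d x) ≤ (∑ x, |d x|) / 2 := by
    calc (∑ x ∈ E, d x) ≤ ∑ x ∈ E, max (d x) 0 :=
          Finset.sum_le_sum fun x _ => le_max_left _ _
      _ ≤ ∑ x, max (d x) 0 :=
          Finset.sum_le_sum_of_subset_of_nonneg (Finset.subset_univ E)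
            fun x _ _ => le_max_right _ _
      _ = (∑ x, |d x|) / 2 := hposs
  have h2 : -(∑ x ∈ E, d x) ≤ (∑ x, |d x|) / 2 := by
    have hd' : ∑ x, (-d) x = 0 := by simp [hd]
    calc -(∑ x ∈ E, d x) = ∑ x ∈ E, (-d) x := by simp
      _ ≤ ∑ x ∈ E, max ((-d) x) 0 := Finset.sum_le_sum fun x _ => le_max_left _ _
      _ ≤ ∑ x, max ((-d) x) 0 :=
          Finset.sum_le_sum_of_subset_of_nonneg (Finset.subset_univ E)
            fun x _ _ => le_max_right _ _
      _ = (∑ x, |(-d) x|) / 2 := by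
          have hmax' : ∀ x, max ((-d) x) 0 = ((-d) x + |(-d) x|) / 2 := by
            intro x
            rcases abs_cases ((-d) x) with ⟨hh1, hh2⟩ | ⟨hh1, hh2⟩
            · rw [max_eq_left hh2, hh1]; ring
            · rw [max_eq_right hh2.le, hh1]; ring
          rw [Finset.sum_congr rfl fun x _ => hmax' x]
          rw [← Finset.sum_div, Finset.sum_add_distrib, hd']
          ring_nf
      _ = (∑ x, |d x|) / 2 := by simp
  rw [abs_le]; constructor <;> linarith

lemma pinsker_js {X : Type*} [Fintype X] (p q : X → ℝ)
    (hp : (∀ x, 0 ≤ p x) ∧ ∑ x, p x = 1) (hq : (∀ x, 0 ≤ q x) ∧ ∑ x, q x = 1) :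
    tvFin p q ≤ Real.sqrt (2 * jsFin p q) := by
  set m : X → ℝ := fun x => (p x + q x)/2 with hm
  have htv_l1 : tvFin p q ≤ ∑ x, |p x - m x| := by
    refine tvFin_le p q fun E => ?_
    have hd : ∑ x, (p x - q x) = 0 := by
      rw [Finset.sum_sub_distrib, hp.2, hq.2]; ring
    have := sum_event_le_half_l1 (fun x => p x - q x) hd E
    calc |∑ x ∈ E, p x - ∑ x ∈ E, q x| = |∑ x ∈ E, (p x - q x)| := by
          rw [Finset.sum_sub_distrib]
      _ ≤ (∑ x, |p x - q x|) / 2 := this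
      _ = ∑ x, |p x - m x| := by
          rw [Finset.sum_div]
          refine Finset.sum_congr rfl fun x _ => ?_
          simp only [hm]
          have hx : p x - (p x + q x)/2 = (p x - q x)/2 := by ring
          rw [hx, abs_div, abs_two]
  have h1 := kl_lower p q hp hq
  have h2 := kl_lower q p hq hp
  have hms : (fun x => (q x + p x)/2) = m := by funext x; simp only [hm]; ring_nf
  rw [hms] at h2
  have hqm : (∑ x, |q x - (q x + p x)/2|) = ∑ x, |p x - m x| := by
    refine Finset.sum_congr rfl fun x _ => ?_
    simp only [hm]
    rw [← abs_neg]
    congr 1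
    ring
  rw [hqm] at h2
  refine Real.le_sqrt_of_sq_le ?_
  have htvnn := tvFin_nonneg p q
  have hl1nn : 0 ≤ ∑ x, |p x - m x| := Finset.sum_nonneg fun x _ => abs_nonneg _
  have hsq : tvFin p q ^ 2 ≤ (∑ x, |p x - m x|)^2 := by
    exact pow_le_pow_left₀ htvnn htv_l1 2
  have : tvFin p q ^2 ≤ klFin p m + klFin q m := by nlinarith
  unfold jsFin
  rw [← hm]
  -- note jsFin's (p x + q x)/2 is defeq to m
  calc tvFin p q ^ 2 ≤ klFin p m + klFin q m := this
    _ = 2 * ((klFin p m + klFin q m) / 2) := by ring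

lemma sum_diff_mul_le {X : Type*} [Fintype X] (p q V : X → ℝ) {δ : ℝ}
    (hpq : ∑ x, p x = ∑ x, q x) (hV : ∀ x, |V x| ≤ δ) (hδ : 0 ≤ δ) :
    (∑ x, (q x - p x) * V x) ≤ 2 * δ * tvFin p q := by
  classical
  set E : Finset X := Finset.univ.filter (fun x => p x ≤ q x) with hE
  have hsplit := Finset.sum_filter_add_sum_filter_not Finset.univ
    (fun x => p x ≤ q x) (fun x => (q x - p x) * V x)
  have hsplit2 := Finset.sum_filter_add_sum_filter_not Finset.univ
    (fun x => p x ≤ q x) (fun x => q x - p x)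
  have htot : ∑ x, (q x - p x) = 0 := by
    rw [Finset.sum_sub_distrib, hpq]; ring
  have hEc : (∑ x ∈ Finset.univ.filter (fun x => ¬ p x ≤ q x), (q x - p x))
      = -(∑ x ∈ E, (q x - p x)) := by
    have := hsplit2; rw [htot] at this; rw [hE]; linarith
  have h1 : (∑ x ∈ E, (q x - p x) * V x) ≤ δ * ∑ x ∈ E, (q x - p x) := by
    rw [Finset.mul_sum]
    refine Finset.sum_le_sum fun x hx => ?_
    have hd : 0 ≤ q x - p x := by
      rw [hE, Finset.mem_filter] at hx; linarith [hx.2]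
    have := (abs_le.mp (hV x)).2
    nlinarith
  have h2 : (∑ x ∈ Finset.univ.filter (fun x => ¬ p x ≤ q x), (q x - p x) * V x)
      ≤ -δ * ∑ x ∈ Finset.univ.filter (fun x => ¬ p x ≤ q x), (q x - p x) := by
    rw [Finset.mul_sum]
    refine Finset.sum_le_sum fun x hx => ?_
    have hd : q x - p x ≤ 0 := by
      rw [Finset.mem_filter] at hx; push_neg at hx; linarith [hx.2]
    have := (abs_le.mp (hV x)).1
    nlinarith
  have hEtv : (∑ x ∈ E, (q x - p x)) ≤ tvFin p q := by
    have h3 : (∑ x ∈ E, (q x - p x)) = -(∑ x ∈ E, p x - ∑ x ∈ E, q x) := by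
      rw [Finset.sum_sub_distrib]; ring
    calc (∑ x ∈ E, (q x - p x)) ≤ |∑ x ∈ E, p x - ∑ x ∈ E, q x| := by
          rw [h3]; exact (neg_le_abs _)
      _ ≤ tvFin p q := le_tvFin p q E
  have hfinal : (∑ x, (q x - p x) * V x) ≤ 2 * δ * ∑ x ∈ E, (q x - p x) := by
    rw [← hsplit]
    have := h2
    rw [hEc] at this
    calc (∑ x ∈ E, (q x - p x) * V x)
          + ∑ x ∈ Finset.univ.filter (fun x => ¬ p x ≤ q x), (q x - p x) * V x
        ≤ δ * (∑ x ∈ E, (q x - p x)) + -δ * -(∑ x ∈ E, (q x - p x)) := by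
          refine add_le_add h1 ?_
          have h2' := h2; rw [hEc] at h2'; exact h2'
      _ = 2 * δ * ∑ x ∈ E, (q x - p x) := by ring
  have hEnn : 0 ≤ ∑ x ∈ E, (q x - p x) := by
    refine Finset.sum_nonneg fun x hx => ?_
    rw [hE, Finset.mem_filter] at hx; linarith [hx.2]
  calc (∑ x, (q x - p x) * V x) ≤ 2 * δ * ∑ x ∈ E, (q x - p x) := hfinal
    _ ≤ 2 * δ * tvFin p q := by
        apply mul_le_mul_of_nonneg_left hEtv (by linarith)

lemma change_measure {X : Type*} [Fintype X] (p q f : X → ℝ)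
    (hf0 : ∀ x, 0 ≤ f x) (hf1 : ∀ x, f x ≤ 1) :
    (∑ x, q x * f x) ≤ (∑ x, p x * f x) + tvFin p q := by
  classical
  have hsplit := Finset.sum_filter_add_sum_filter_not Finset.univ
    (fun x => p x ≤ q x) (fun x => (q x - p x) * f x)
  have h1 : (∑ x ∈ Finset.univ.filter (fun x => p x ≤ q x), (q x - p x) * f x)
      ≤ ∑ x ∈ Finset.univ.filter (fun x => p x ≤ q x), (q x - p x) := by
    refine Finset.sum_le_sum fun x hx => ?_
    rw [Finset.mem_filter] at hx
    have := hf0 x; have := hf1 x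
    nlinarith [hx.2]
  have h2 : (∑ x ∈ Finset.univ.filter (fun x => ¬ p x ≤ q x), (q x - p x) * f x) ≤ 0 := by
    refine Finset.sum_nonpos fun x hx => ?_
    rw [Finset.mem_filter] at hx
    push_neg at hx
    have := hf0 x
    nlinarith [hx.2]
  have h3 : (∑ x ∈ Finset.univ.filter (fun x => p x ≤ q x), (q x - p x)) ≤ tvFin p q := by
    calc (∑ x ∈ Finset.univ.filter (fun x => p x ≤ q x), (q x - p x))
        ≤ |∑ x ∈ Finset.univ.filter (fun x => p x ≤ q x), p x
            - ∑ x ∈ Finset.univ.filter (fun x => p x ≤ q x), q x| := by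
          rw [← Finset.sum_sub_distrib]
          calc (∑ x ∈ Finset.univ.filter (fun x => p x ≤ q x), (q x - p x))
              = -(∑ x ∈ Finset.univ.filter (fun x => p x ≤ q x), (p x - q x)) := by
                rw [← Finset.sum_neg_distrib]
                exact Finset.sum_congr rfl fun x _ => by ring
            _ ≤ |∑ x ∈ Finset.univ.filter (fun x => p x ≤ q x), (p x - q x)| := neg_le_abs _
      _ ≤ tvFin p q := le_tvFin p q _
  have key : (∑ x, (q x - p x) * f x) ≤ tvFin p q := by
    rw [← hsplit]
    linarith
  have hexp : (∑ x, (q x - p x) * f x) = (∑ x, q x * f x) - ∑ x, p x * f x := by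
    rw [← Finset.sum_sub_distrib]
    exact Finset.sum_congr rfl fun x _ => by ring
  linarith [hexp ▸ key]

lemma occupancy_nonneg (M : MDP S A) (π : S → A → ℝ) (μ₀ : S → ℝ)
    (hπ : IsPolicy π) (hT : IsKernel M.T) (hμ : IsDist μ₀) (hγ1 : M.γ < 1) (hγ0 : 0 < M.γ)
    (s : S) (a : A) : 0 ≤ occupancy M π μ₀ s a := by
  unfold occupancy
  have h1 : 0 ≤ ∑' t : ℕ, M.γ ^ t * stateDist M π μ₀ t s :=
    tsum_nonneg fun t => mul_nonneg (pow_nonneg hγ0.le t)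
      (stateDist_nonneg M π μ₀ hπ hT hμ.1 t s)
  have h2 : (0:ℝ) ≤ 1 - M.γ := by linarith
  exact mul_nonneg (mul_nonneg h2 h1) (hπ.1 s a)

lemma occupancy_sum (M : MDP S A) (π : S → A → ℝ) (μ₀ : S → ℝ)
    (hπ : IsPolicy π) (hT : IsKernel M.T) (hμ : IsDist μ₀) (hγ0 : 0 < M.γ) (hγ1 : M.γ < 1) :
    ∑ s, ∑ a, occupancy M π μ₀ s a = 1 := by
  have hsummable : ∀ s, Summable (fun t => M.γ ^ t * stateDist M π μ₀ t s) := by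
    intro s
    refine summable_geom_bdd hγ0.le hγ1 (c := 1) (fun t => ?_)
    rw [abs_of_nonneg (stateDist_nonneg M π μ₀ hπ hT hμ.1 t s)]
    exact stateDist_le_one M π μ₀ hπ hT hμ t s
  have h1 : ∀ s, ∑ a, occupancy M π μ₀ s a
      = (1 - M.γ) * (∑' t : ℕ, M.γ ^ t * stateDist M π μ₀ t s) := by
    intro s
    unfold occupancy
    rw [← Finset.mul_sum, hπ.2 s, mul_one]
  rw [Finset.sum_congr rfl fun s _ => h1 s, ← Finset.mul_sum]
  have h2 : (∑ s, ∑' t : ℕ, M.γ ^ t * stateDist M π μ₀ t s)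
      = ∑' t : ℕ, ∑ s, M.γ ^ t * stateDist M π μ₀ t s :=
    (Summable.tsum_finsetSum fun s _ => hsummable s).symm
  rw [h2]
  have h3 : ∀ t : ℕ, (∑ s, M.γ ^ t * stateDist M π μ₀ t s) = M.γ ^ t := by
    intro t
    rw [← Finset.mul_sum, stateDist_sum M π μ₀ hπ hT hμ.2 t, mul_one]
  rw [tsum_congr h3, tsum_geometric_of_lt_one hγ0.le hγ1]
  rw [mul_inv_cancel₀ (by linarith : (1:ℝ) - M.γ ≠ 0)]


/-- Performance lower bound (Theorem 1): for MDPs `M`, `M̂` with the same reward and value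
functions bounded by `δ`, learner policy `π` and behavior policy `π_D`,
`J(π,M) ≥ J(π,M̂) - (2γδ/(1-γ)) (E_{(s,a) ∼ ρ^{π_D}_M}[d_TV(T(·|s,a), T̂(·|s,a))]
 + sqrt(2 d_JS(ρ^{π_D}_M, ρ^π_{M̂})))`. -/
theorem performance_lower_bound (M Mhat : MDP S A) (π πD : S → A → ℝ) (μ₀ : S → ℝ) (δ : ℝ)
    (hr : M.r = Mhat.r) (hγ : M.γ = Mhat.γ) (hγ0 : 0 < M.γ) (hγ1 : M.γ < 1)
    (hπ : IsPolicy π) (hπD : IsPolicy πD)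
    (hT : IsKernel M.T) (hThat : IsKernel Mhat.T) (hμ : IsDist μ₀)
    (hV : ∀ s, |Vval M π s| ≤ δ) :
    Jval M π μ₀ ≥ Jval Mhat π μ₀ -
      (2 * M.γ * δ / (1 - M.γ)) *
        ((∑ s, ∑ a, occupancy M πD μ₀ s a * tvFin (M.T s a) (Mhat.T s a)) +
          Real.sqrt (2 * jsFin (fun x : S × A => occupancy M πD μ₀ x.1 x.2)
            (fun x : S × A => occupancy Mhat π μ₀ x.1 x.2))) := by
  classical
  have hγ0' : 0 < Mhat.γ := hγ ▸ hγ0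
  have hγ1' : Mhat.γ < 1 := hγ ▸ hγ1
  -- S is nonempty, δ ≥ 0
  have hS : Nonempty S := by
    by_contra h
    rw [not_nonempty_iff] at h
    have := hμ.2
    rw [Finset.univ_eq_empty, Finset.sum_empty] at this
    norm_num at this
  obtain ⟨s₀⟩ := hS
  have hδ : 0 ≤ δ := (abs_nonneg _).trans (hV s₀)
  set f : S → A → ℝ := fun s a => tvFin (M.T s a) (Mhat.T s a) with hfdef
  have hf0 : ∀ s a, 0 ≤ f s a := fun s a => tvFin_nonneg _ _
  have hf1 : ∀ s a, f s a ≤ 1 := fun s a =>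
    tvFin_le_one _ _ ⟨fun s' => hT.1 s a s', hT.2 s a⟩ ⟨fun s' => hThat.1 s a s', hThat.2 s a⟩
  have hinner : ∀ s a, (∑ s', (Mhat.T s a s' - M.T s a s') * Vval M π s') ≤ 2 * δ * f s a := by
    intro s a
    exact sum_diff_mul_le (M.T s a) (Mhat.T s a) (Vval M π)
      (by rw [hT.2 s a, hThat.2 s a]) hV hδ
  -- bound on Dexp
  have hPnn : ∀ j s, 0 ≤ stateDist Mhat π μ₀ j s :=
    fun j s => stateDist_nonneg Mhat π μ₀ hπ hThat hμ.1 j s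
  have hPle : ∀ j s, stateDist Mhat π μ₀ j s ≤ 1 :=
    fun j s => stateDist_le_one Mhat π μ₀ hπ hThat hμ j s
  have hD : ∀ j, Dexp M Mhat π μ₀ j
      ≤ ∑ s, ∑ a, stateDist Mhat π μ₀ j s * π s a * (2 * δ * f s a) := by
    intro j
    unfold Dexp
    refine Finset.sum_le_sum fun s _ => Finset.sum_le_sum fun a _ => ?_
    exact mul_le_mul_of_nonneg_left (hinner s a) (mul_nonneg (hPnn j s) (hπ.1 s a))
  -- summability facts
  have hsumP : ∀ s, Summable (fun j => M.γ ^ j * stateDist Mhat π μ₀ j s) := by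
    intro s
    refine summable_geom_bdd hγ0.le hγ1 (c := 1) (fun j => ?_)
    rw [abs_of_nonneg (hPnn j s)]
    exact hPle j s
  set C : ℝ := ∑ s, ∑ a, |∑ s', (Mhat.T s a s' - M.T s a s') * Vval M π s'| with hC
  have hDb : ∀ j, |Dexp M Mhat π μ₀ j| ≤ C := by
    intro j
    unfold Dexp
    refine (Finset.abs_sum_le_sum_abs _ _).trans (Finset.sum_le_sum fun s _ => ?_)
    refine (Finset.abs_sum_le_sum_abs _ _).trans (Finset.sum_le_sum fun a _ => ?_)
    rw [abs_mul, abs_mul]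
    have h1 : |stateDist Mhat π μ₀ j s| ≤ 1 := by rw [abs_of_nonneg (hPnn j s)]; exact hPle j s
    have h2 : |π s a| ≤ 1 := by rw [abs_of_nonneg (hπ.1 s a)]; exact pi_le_one π hπ s a
    calc |stateDist Mhat π μ₀ j s| * |π s a| * |∑ s', (Mhat.T s a s' - M.T s a s') * Vval M π s'|
        ≤ 1 * 1 * |∑ s', (Mhat.T s a s' - M.T s a s') * Vval M π s'| := by
          apply mul_le_mul_of_nonneg_right _ (abs_nonneg _)
          exact mul_le_mul h1 h2 (abs_nonneg _) zero_le_one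
      _ = _ := by ring
  have hsumD : Summable (fun j => M.γ ^ (j+1) * Dexp M Mhat π μ₀ j) := by
    have : Summable (fun j => M.γ ^ j * (M.γ * Dexp M Mhat π μ₀ j)) := by
      refine summable_geom_bdd hγ0.le hγ1 (c := M.γ * C) (fun j => ?_)
      rw [abs_mul, abs_of_nonneg hγ0.le]
      exact mul_le_mul_of_nonneg_left (hDb j) hγ0.le
    refine this.congr fun j => ?_
    rw [pow_succ]; ring
  set C2 : ℝ := ∑ s, ∑ a, (2 * δ * f s a) with hC2
  have hRHSb : ∀ j, |∑ s, ∑ a, stateDist Mhat π μ₀ j s * π s a * (2 * δ * f s a)| ≤ C2 := by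
    intro j
    refine (Finset.abs_sum_le_sum_abs _ _).trans (Finset.sum_le_sum fun s _ => ?_)
    refine (Finset.abs_sum_le_sum_abs _ _).trans (Finset.sum_le_sum fun a _ => ?_)
    rw [abs_mul, abs_mul]
    have h1 : |stateDist Mhat π μ₀ j s| ≤ 1 := by rw [abs_of_nonneg (hPnn j s)]; exact hPle j s
    have h2 : |π s a| ≤ 1 := by rw [abs_of_nonneg (hπ.1 s a)]; exact pi_le_one π hπ s a
    have h3 : |2 * δ * f s a| = 2 * δ * f s a := abs_of_nonneg (by
      have := hf0 s a; positivity)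
    rw [h3]
    calc |stateDist Mhat π μ₀ j s| * |π s a| * (2 * δ * f s a)
        ≤ 1 * 1 * (2 * δ * f s a) := by
          apply mul_le_mul_of_nonneg_right _ (by have := hf0 s a; positivity)
          exact mul_le_mul h1 h2 (abs_nonneg _) zero_le_one
      _ = _ := by ring
  have hsumRHS : Summable (fun j => M.γ ^ (j+1)
      * (∑ s, ∑ a, stateDist Mhat π μ₀ j s * π s a * (2 * δ * f s a))) := by
    have : Summable (fun j => M.γ ^ j
        * (M.γ * ∑ s, ∑ a, stateDist Mhat π μ₀ j s * π s a * (2 * δ * f s a))) := by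
      refine summable_geom_bdd hγ0.le hγ1 (c := M.γ * C2) (fun j => ?_)
      rw [abs_mul, abs_of_nonneg hγ0.le]
      exact mul_le_mul_of_nonneg_left (hRHSb j) hγ0.le
    refine this.congr fun j => ?_
    rw [pow_succ]; ring
  -- the telescoping identity
  have hJd := J_diff M Mhat π μ₀ hr hγ hγ0 hγ1 hπ hT hThat hμ
  -- bound the tsum
  have hstep1 : (∑' j : ℕ, M.γ ^ (j+1) * Dexp M Mhat π μ₀ j)
      ≤ ∑' j : ℕ, M.γ ^ (j+1) * (∑ s, ∑ a, stateDist Mhat π μ₀ j s * π s a * (2 * δ * f s a)) := by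
    refine Summable.tsum_le_tsum (fun j => ?_) hsumD hsumRHS
    exact mul_le_mul_of_nonneg_left (hD j) (pow_nonneg hγ0.le (j+1))
  -- compute the RHS tsum
  set G : S → ℝ := fun s => ∑' t : ℕ, M.γ ^ t * stateDist Mhat π μ₀ t s with hG
  have hswap : (∑' j : ℕ, M.γ ^ (j+1)
        * (∑ s, ∑ a, stateDist Mhat π μ₀ j s * π s a * (2 * δ * f s a)))
      = ∑ s, ∑ a, M.γ * (π s a * (2 * δ * f s a)) * G s := by
    have hsum_sa : ∀ s a, Summable (fun j => M.γ * (π s a * (2 * δ * f s a))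
        * (M.γ ^ j * stateDist Mhat π μ₀ j s)) :=
      fun s a => (hsumP s).mul_left _
    calc (∑' j : ℕ, M.γ ^ (j+1)
          * (∑ s, ∑ a, stateDist Mhat π μ₀ j s * π s a * (2 * δ * f s a)))
        = ∑' j : ℕ, ∑ s, ∑ a, M.γ * (π s a * (2 * δ * f s a))
            * (M.γ ^ j * stateDist Mhat π μ₀ j s) := by
          refine tsum_congr fun j => ?_
          rw [Finset.mul_sum]
          refine Finset.sum_congr rfl fun s _ => ?_
          rw [Finset.mul_sum]
          refine Finset.sum_congr rfl fun a _ => ?_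
          rw [pow_succ]
          ring
      _ = ∑ s, ∑' j : ℕ, ∑ a, M.γ * (π s a * (2 * δ * f s a))
            * (M.γ ^ j * stateDist Mhat π μ₀ j s) := by
          refine Summable.tsum_finsetSum fun s _ => ?_
          exact summable_sum fun a _ => hsum_sa s a
      _ = ∑ s, ∑ a, ∑' j : ℕ, M.γ * (π s a * (2 * δ * f s a))
            * (M.γ ^ j * stateDist Mhat π μ₀ j s) := by
          refine Finset.sum_congr rfl fun s _ => ?_
          exact Summable.tsum_finsetSum fun a _ => hsum_sa s a
      _ = ∑ s, ∑ a, M.γ * (π s a * (2 * δ * f s a)) * G s := by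
          refine Finset.sum_congr rfl fun s _ => Finset.sum_congr rfl fun a _ => ?_
          rw [hG, tsum_mul_left]
  -- relate to occupancy of Mhat
  have hocc : ∀ s a, occupancy Mhat π μ₀ s a = (1 - M.γ) * G s * π s a := by
    intro s a
    unfold occupancy
    rw [hG, ← hγ]
  have hocc_f : (∑ s, ∑ a, M.γ * (π s a * (2 * δ * f s a)) * G s)
      = (2 * M.γ * δ / (1 - M.γ)) * ∑ s, ∑ a, occupancy Mhat π μ₀ s a * f s a := by
    rw [Finset.mul_sum]
    refine Finset.sum_congr rfl fun s _ => ?_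
    rw [Finset.mul_sum]
    refine Finset.sum_congr rfl fun a _ => ?_
    rw [hocc s a, div_mul_eq_mul_div, eq_div_iff (by linarith : (1:ℝ) - M.γ ≠ 0)]
    ring
  -- measure change, Pinsker
  set ρD : S × A → ℝ := fun x => occupancy M πD μ₀ x.1 x.2 with hρD
  set ρh : S × A → ℝ := fun x => occupancy Mhat π μ₀ x.1 x.2 with hρh
  have hρDd : (∀ x, 0 ≤ ρD x) ∧ ∑ x, ρD x = 1 := by
    constructor
    · intro x; exact occupancy_nonneg M πD μ₀ hπD hT hμ hγ1 hγ0 x.1 x.2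
    · rw [hρD, Fintype.sum_prod_type]
      exact occupancy_sum M πD μ₀ hπD hT hμ hγ0 hγ1
  have hρhd : (∀ x, 0 ≤ ρh x) ∧ ∑ x, ρh x = 1 := by
    constructor
    · intro x; exact occupancy_nonneg Mhat π μ₀ hπ hThat hμ hγ1' hγ0' x.1 x.2
    · rw [hρh, Fintype.sum_prod_type]
      exact occupancy_sum Mhat π μ₀ hπ hThat hμ hγ0' hγ1'
  have hcm : (∑ s, ∑ a, occupancy Mhat π μ₀ s a * f s a)
      ≤ (∑ s, ∑ a, occupancy M πD μ₀ s a * f s a) + Real.sqrt (2 * jsFin ρD ρh) := by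
    have h1 := change_measure ρD ρh (fun x => f x.1 x.2)
      (fun x => hf0 x.1 x.2) (fun x => hf1 x.1 x.2)
    have h2 := pinsker_js ρD ρh hρDd hρhd
    rw [Fintype.sum_prod_type (f := fun x : S × A => ρh x * f x.1 x.2)] at h1
    rw [Fintype.sum_prod_type (f := fun x : S × A => ρD x * f x.1 x.2)] at h1
    calc (∑ s, ∑ a, occupancy Mhat π μ₀ s a * f s a)
        ≤ (∑ s, ∑ a, occupancy M πD μ₀ s a * f s a) + tvFin ρD ρh := h1
      _ ≤ (∑ s, ∑ a, occupancy M πD μ₀ s a * f s a) + Real.sqrt (2 * jsFin ρD ρh) := by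
          linarith
  -- put everything together
  have hconst : 0 ≤ 2 * M.γ * δ / (1 - M.γ) := by
    have : (0:ℝ) < 1 - M.γ := by linarith
    positivity
  have hfinal : (∑' j : ℕ, M.γ ^ (j+1) * Dexp M Mhat π μ₀ j)
      ≤ (2 * M.γ * δ / (1 - M.γ)) *
        ((∑ s, ∑ a, occupancy M πD μ₀ s a * f s a) + Real.sqrt (2 * jsFin ρD ρh)) := by
    calc (∑' j : ℕ, M.γ ^ (j+1) * Dexp M Mhat π μ₀ j)
        ≤ ∑' j : ℕ, M.γ ^ (j+1)
            * (∑ s, ∑ a, stateDist Mhat π μ₀ j s * π s a * (2 * δ * f s a)) := hstep1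
      _ = (2 * M.γ * δ / (1 - M.γ)) * ∑ s, ∑ a, occupancy Mhat π μ₀ s a * f s a := by
          rw [hswap, hocc_f]
      _ ≤ (2 * M.γ * δ / (1 - M.γ)) *
          ((∑ s, ∑ a, occupancy M πD μ₀ s a * f s a) + Real.sqrt (2 * jsFin ρD ρh)) :=
          mul_le_mul_of_nonneg_left hcm hconst
  rw [ge_iff_le, sub_le_iff_le_add, hJd]
  linarith [hfinal]
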